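/- Let γ, N be real with N ≥ 1 and γ^2 < 2N + 3. Define V(x) = -γ/4 + ((γ^2 - 3 - 2N)/16) x^2 + (γ/32) x^4 + (1/256) x^6. Then V has exactly two global minimizers at x = ±x0, where x0^2 = (4/3)√(4γ^2 - 3(γ^2 - 3 - 2N)) - 8γ/3 > 0. -/
import Mathlib


theorem sextic_double_well_minimizers (γ N : ℝ) (hN : 1 ≤ N) (hγ2 : γ^2 < 2*N + 3)
    (V : ℝ → ℝ)
    (hV : ∀ x, V x = -γ/4 + ((γ^2 - 3 - 2*N)/16)*x^2 + (γ/32)*x^4 + (1/256)*x^6)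
    (x0 : ℝ) (hx0pos : 0 < x0)
    (hx0sq : x0^2 = (4/3)*Real.sqrt (γ^2 + 9 + 6*N) - 8*γ/3) :
    (0 < (4/3)*Real.sqrt (γ^2 + 9 + 6*N) - 8*γ/3) ∧
    (∀ x : ℝ, V x0 ≤ V x) ∧
    (∀ x : ℝ, (∀ y : ℝ, V x ≤ V y) → x = x0 ∨ x = -x0) := by
  set s : ℝ := Real.sqrt (γ^2 + 9 + 6*N) with hs_def
  have hsnn : 0 ≤ s := Real.sqrt_nonneg _
  have hs : s^2 = γ^2 + 9 + 6*N := by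
    rw [hs_def, Real.sq_sqrt]; nlinarith
  have hsγ : γ < s := by nlinarith [sq_nonneg (s + γ)]
  have hpos : 0 < (4/3)*s - 8*γ/3 := by nlinarith [sq_nonneg (s + 2*γ)]
  have key : ∀ x : ℝ, V x = V x0 + (1/256)*(x^2 - x0^2)^2*(x^2 + (8/3)*(γ+s)) := by
    intro x
    rw [hV x, hV x0]
    linear_combination (-(x0^2)^2/256 - γ*x0^2/32 - x^2*x0^2/256 - s*x0^2/64 + γ^2/48
        + 3/16 + N/8 + x^4/128 + x^2*γ/32 + x^2*s/64 - s^2/48) * hx0sq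
      + (x^2/48 - s/36 + γ/18) * hs
  have hfac : ∀ x : ℝ, 0 < x^2 + (8/3)*(γ+s) := by
    intro x; nlinarith [sq_nonneg x]
  refine ⟨hpos, fun x => ?_, fun x hx => ?_⟩
  · rw [key x]; nlinarith [sq_nonneg (x^2 - x0^2), hfac x]
  · have h1 : V x ≤ V x0 := hx x0
    have h2 : V x0 ≤ V x := by rw [key x]; nlinarith [sq_nonneg (x^2 - x0^2), hfac x]
    have heq : V x = V x0 := le_antisymm h1 h2
    have h3 : (1/256)*(x^2 - x0^2)^2*(x^2 + (8/3)*(γ+s)) = 0 := by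
      have := key x; linarith [this, heq]
    have h4 : (x^2 - x0^2)^2 = 0 := by
      rcases mul_eq_zero.mp h3 with h | h
      · rcases mul_eq_zero.mp h with h' | h'
        · norm_num at h'
        · exact h'
      · exact absurd h (ne_of_gt (hfac x))
    have h5 : x^2 = x0^2 := by nlinarith [sq_nonneg (x^2 - x0^2)]
    have h6 : (x - x0) * (x + x0) = 0 := by nlinarith
    rcases mul_eq_zero.mp h6 with h | h
    · left; linarith
    · right; linarith
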